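/- arXiv:1702.04080 — 3 statements merged into one kernel-verified Lean document; each statement's English description precedes it below -/
import Mathlib

section
/- Sum-capacity conservation for one polarization step over two different channels: for any two B-DMCs W₁ and W₂, the bit channels W⁻ and W⁺ of the single-step polar transform satisfy I(W⁻) + I(W⁺) = I(W₁) + I(W₂). -/
lemma sum_zmod2 {M : Type*} [AddCommMonoid M] (f : ZMod 2 → M) :
    ∑ x : ZMod 2, f x = f 0 + f 1 := by
  have h : (Finset.univ : Finset (ZMod 2)) = {0, 1} := by decide
  rw [h, Finset.sum_insert (by decide), Finset.sum_singleton]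

lemma sum_rot3 {α β γ M : Type*} [AddCommMonoid M] [Fintype α] [Fintype β] [Fintype γ]
    (f : α → β → γ → M) :
    ∑ a, ∑ b, ∑ c, f a b c = ∑ c, ∑ a, ∑ b, f a b c := by
  calc ∑ a, ∑ b, ∑ c, f a b c = ∑ a, ∑ c, ∑ b, f a b c :=
        Finset.sum_congr rfl (fun a _ => Finset.sum_comm)
    _ = ∑ c, ∑ a, ∑ b, f a b c := Finset.sum_comm

lemma sum_rot3' {α β γ M : Type*} [AddCommMonoid M] [Fintype α] [Fintype β] [Fintype γ]
    (f : α → β → γ → M) :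
    ∑ a, ∑ b, ∑ c, f a b c = ∑ b, ∑ c, ∑ a, f a b c :=
  (sum_rot3 (fun b c a => f a b c)).symm

lemma sum_rot4 {α β γ δ M : Type*} [AddCommMonoid M] [Fintype α] [Fintype β] [Fintype γ]
    [Fintype δ] (f : α → β → γ → δ → M) :
    ∑ a, ∑ b, ∑ c, ∑ d, f a b c d = ∑ d, ∑ a, ∑ b, ∑ c, f a b c d := by
  calc ∑ a, ∑ b, ∑ c, ∑ d, f a b c d = ∑ a, ∑ d, ∑ b, ∑ c, f a b c d :=
        Finset.sum_congr rfl (fun a _ => sum_rot3 (f a))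
    _ = ∑ d, ∑ a, ∑ b, ∑ c, f a b c d := Finset.sum_comm

lemma sum_weight_eq {Y : Type*} [Fintype Y] {W : Y → ℝ} (hW : ∑ y, W y = 1) (K : ℝ)
    (f : Y → ℝ) (hf : ∀ y, f y = W y * K) : ∑ y, f y = K := by
  calc ∑ y, f y = ∑ y, W y * K := Finset.sum_congr rfl (fun y _ => hf y)
    _ = (∑ y, W y) * K := (Finset.sum_mul _ _ _).symm
    _ = K := by rw [hW, one_mul]

lemma key_log (c₁ c₂ a₁ a₂ m : ℝ) (hc₁ : 0 ≤ c₁) (hc₂ : 0 ≤ c₂)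
    (ha₁ : c₁ ≤ a₁) (ha₂ : c₂ ≤ a₂) (hm : (1/2)*(c₁*c₂) ≤ m) :
    (1/4)*(c₁*c₂) * Real.logb 2 (m / ((a₁*a₂/2)/2))
      + (1/2)*((1/2)*c₁*c₂) * Real.logb 2 (((1/2)*c₁*c₂) / (m/2))
    = (1/4)*(c₁*c₂) * (Real.logb 2 (c₁/(a₁/2)) + Real.logb 2 (c₂/(a₂/2))) := by
  rcases (mul_nonneg hc₁ hc₂).eq_or_lt with h | h
  · rcases mul_eq_zero.mp h.symm with h0 | h0 <;> simp [h0]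
  · have hc₁' : 0 < c₁ := hc₁.lt_of_ne (by rintro rfl; simp at h)
    have hc₂' : 0 < c₂ := hc₂.lt_of_ne (by rintro rfl; simp at h)
    have ha₁' : 0 < a₁ := hc₁'.trans_le ha₁
    have ha₂' : 0 < a₂ := hc₂'.trans_le ha₂
    have hm' : 0 < m := lt_of_lt_of_le (by positivity) hm
    have e1 : m / ((a₁*a₂/2)/2) ≠ 0 := by positivity
    have e2 : ((1/2)*c₁*c₂) / (m/2) ≠ 0 := by positivity
    have e3 : c₁/(a₁/2) ≠ 0 := by positivity
    have e4 : c₂/(a₂/2) ≠ 0 := by positivity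
    have hco : (1/2)*((1/2)*c₁*c₂) = (1/4)*(c₁*c₂) := by ring
    have harg : m / ((a₁*a₂/2)/2) * (((1/2)*c₁*c₂) / (m/2)) = (c₁/(a₁/2)) * (c₂/(a₂/2)) := by
      field_simp
    rw [hco, ← mul_add, ← Real.logb_mul e1 e2, ← Real.logb_mul e3 e4, harg]

/-- A binary-input discrete memoryless channel (B-DMC) with finite output alphabet `Y`:
nonnegative transition probabilities summing to one for each input. -/
def IsBDMC {Y : Type} [Fintype Y] (W : ZMod 2 → Y → ℝ) : Prop :=
  (∀ x y, 0 ≤ W x y) ∧ ∀ x, ∑ y, W x y = 1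

/-- The symmetric capacity `I(W)` of a B-DMC (terms with `W x y = 0` vanish automatically). -/
noncomputable def symCap {Y : Type} [Fintype Y] (W : ZMod 2 → Y → ℝ) : ℝ :=
  ∑ x : ZMod 2, ∑ y, (1 / 2) * W x y * Real.logb 2 (W x y / ((W 0 y + W 1 y) / 2))

/-- The Bhattacharyya parameter `Z(W)` of a B-DMC. -/
noncomputable def bhat {Y : Type} [Fintype Y] (W : ZMod 2 → Y → ℝ) : ℝ :=
  ∑ y, Real.sqrt (W 0 y * W 1 y)

/-- The first (minus) bit channel of the single-step polar transform of `W₁` and `W₂`. -/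
noncomputable def polarMinus {Y₁ Y₂ : Type} (W₁ : ZMod 2 → Y₁ → ℝ) (W₂ : ZMod 2 → Y₂ → ℝ) :
    ZMod 2 → Y₁ × Y₂ → ℝ :=
  fun u₁ y => (1 / 2) * ∑ u₂ : ZMod 2, W₁ (u₁ + u₂) y.1 * W₂ u₂ y.2

/-- The second (plus) bit channel of the single-step polar transform of `W₁` and `W₂`. -/
noncomputable def polarPlus {Y₁ Y₂ : Type} (W₁ : ZMod 2 → Y₁ → ℝ) (W₂ : ZMod 2 → Y₂ → ℝ) :
    ZMod 2 → Y₁ × Y₂ × ZMod 2 → ℝ :=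
  fun u₂ y => (1 / 2) * W₁ (y.2.2 + u₂) y.1 * W₂ u₂ y.2.1

/-- The zero-capacity (punctured) channel with singleton output alphabet. -/
def puncturedChannel : ZMod 2 → PUnit → ℝ := fun _ _ => 1

/-- Sum-capacity conservation for one polarization step over two
different channels: `I(W⁻) + I(W⁺) = I(W₁) + I(W₂)`. -/
theorem sum_capacity_one_step {Y₁ Y₂ : Type} [Fintype Y₁] [Fintype Y₂]
    (W₁ : ZMod 2 → Y₁ → ℝ) (W₂ : ZMod 2 → Y₂ → ℝ)
    (h₁ : IsBDMC W₁) (h₂ : IsBDMC W₂) :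
    symCap (polarMinus W₁ W₂) + symCap (polarPlus W₁ W₂) = symCap W₁ + symCap W₂ := by
  obtain ⟨hW₁0, hW₁s⟩ := h₁
  obtain ⟨hW₂0, hW₂s⟩ := h₂
  -- basic facts
  have hMsum : ∀ (y₁ : Y₁) (y₂ : Y₂),
      polarMinus W₁ W₂ 0 (y₁,y₂) + polarMinus W₁ W₂ 1 (y₁,y₂)
      = (W₁ 0 y₁ + W₁ 1 y₁) * (W₂ 0 y₂ + W₂ 1 y₂) / 2 := by
    intro y₁ y₂
    simp only [polarMinus, sum_zmod2]
    have h11 : (1 + 1 : ZMod 2) = 0 := by decide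
    simp only [add_zero, zero_add, h11]
    ring
  have hPsum : ∀ (y₁ : Y₁) (y₂ : Y₂) (u₁ : ZMod 2),
      polarPlus W₁ W₂ 0 (y₁,y₂,u₁) + polarPlus W₁ W₂ 1 (y₁,y₂,u₁)
      = polarMinus W₁ W₂ u₁ (y₁,y₂) := by
    intro y₁ y₂ u₁
    simp only [polarPlus, polarMinus, sum_zmod2]
    ring
  have expand : ∀ (u₁ : ZMod 2) (y₁ : Y₁) (y₂ : Y₂) (L : ℝ),
      (1/2) * polarMinus W₁ W₂ u₁ (y₁,y₂) * L
      = ∑ u₂ : ZMod 2, (1/4) * (W₁ (u₁+u₂) y₁ * W₂ u₂ y₂) * L := by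
    intro u₁ y₁ y₂ L
    simp only [polarMinus, sum_zmod2]
    ring
  have reindex : ∀ (u₂ : ZMod 2) (F : ZMod 2 → ℝ),
      ∑ u₁ : ZMod 2, F (u₁+u₂) = ∑ x : ZMod 2, F x :=
    fun u₂ F => Fintype.sum_equiv (Equiv.addRight u₂) _ _ (fun x => rfl)
  have hmb : ∀ (u₁ u₂ : ZMod 2) (y₁ : Y₁) (y₂ : Y₂),
      (1/2) * (W₁ (u₁+u₂) y₁ * W₂ u₂ y₂) ≤ polarMinus W₁ W₂ u₁ (y₁,y₂) := by
    intro u₁ u₂ y₁ y₂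
    simp only [polarMinus]
    have : W₁ (u₁+u₂) y₁ * W₂ u₂ y₂ ≤ ∑ v : ZMod 2, W₁ (u₁+v) y₁ * W₂ v y₂ :=
      Finset.single_le_sum (f := fun v => W₁ (u₁+v) y₁ * W₂ v y₂)
        (fun v _ => mul_nonneg (hW₁0 _ _) (hW₂0 _ _)) (Finset.mem_univ u₂)
    nlinarith
  have hle₁ : ∀ (x : ZMod 2) (y : Y₁), W₁ x y ≤ W₁ 0 y + W₁ 1 y := by
    intro x y
    have hx : ∀ z : ZMod 2, z = 0 ∨ z = 1 := by decide
    rcases hx x with rfl | rfl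
    · linarith [hW₁0 1 y]
    · linarith [hW₁0 0 y]
  have hle₂ : ∀ (x : ZMod 2) (y : Y₂), W₂ x y ≤ W₂ 0 y + W₂ 1 y := by
    intro x y
    have hx : ∀ z : ZMod 2, z = 0 ∨ z = 1 := by decide
    rcases hx x with rfl | rfl
    · linarith [hW₂0 1 y]
    · linarith [hW₂0 0 y]
  -- capacities of bit channels as quadruple sums
  have eM : symCap (polarMinus W₁ W₂) =
      ∑ u₂ : ZMod 2, ∑ y₁ : Y₁, ∑ y₂ : Y₂, ∑ u₁ : ZMod 2,
        (1/4) * (W₁ (u₁+u₂) y₁ * W₂ u₂ y₂) *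
          Real.logb 2 (polarMinus W₁ W₂ u₁ (y₁,y₂) /
            ((polarMinus W₁ W₂ 0 (y₁,y₂) + polarMinus W₁ W₂ 1 (y₁,y₂))/2)) := by
    calc symCap (polarMinus W₁ W₂)
        = ∑ u₁ : ZMod 2, ∑ y₁ : Y₁, ∑ y₂ : Y₂,
            (1/2) * polarMinus W₁ W₂ u₁ (y₁,y₂) *
              Real.logb 2 (polarMinus W₁ W₂ u₁ (y₁,y₂) /
                ((polarMinus W₁ W₂ 0 (y₁,y₂) + polarMinus W₁ W₂ 1 (y₁,y₂))/2)) := by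
          simp only [symCap, Fintype.sum_prod_type]
      _ = ∑ u₁ : ZMod 2, ∑ y₁ : Y₁, ∑ y₂ : Y₂, ∑ u₂ : ZMod 2,
            (1/4) * (W₁ (u₁+u₂) y₁ * W₂ u₂ y₂) *
              Real.logb 2 (polarMinus W₁ W₂ u₁ (y₁,y₂) /
                ((polarMinus W₁ W₂ 0 (y₁,y₂) + polarMinus W₁ W₂ 1 (y₁,y₂))/2)) :=
          Finset.sum_congr rfl fun u₁ _ => Finset.sum_congr rfl fun y₁ _ =>
            Finset.sum_congr rfl fun y₂ _ => expand u₁ y₁ y₂ _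
      _ = ∑ u₂ : ZMod 2, ∑ u₁ : ZMod 2, ∑ y₁ : Y₁, ∑ y₂ : Y₂,
            (1/4) * (W₁ (u₁+u₂) y₁ * W₂ u₂ y₂) *
              Real.logb 2 (polarMinus W₁ W₂ u₁ (y₁,y₂) /
                ((polarMinus W₁ W₂ 0 (y₁,y₂) + polarMinus W₁ W₂ 1 (y₁,y₂))/2)) :=
          sum_rot4 _
      _ = _ := Finset.sum_congr rfl fun u₂ _ => sum_rot3' _
  have eP : symCap (polarPlus W₁ W₂) =
      ∑ u₂ : ZMod 2, ∑ y₁ : Y₁, ∑ y₂ : Y₂, ∑ u₁ : ZMod 2,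
        (1/2) * polarPlus W₁ W₂ u₂ (y₁,y₂,u₁) *
          Real.logb 2 (polarPlus W₁ W₂ u₂ (y₁,y₂,u₁) /
            ((polarPlus W₁ W₂ 0 (y₁,y₂,u₁) + polarPlus W₁ W₂ 1 (y₁,y₂,u₁))/2)) := by
    simp only [symCap, Fintype.sum_prod_type]
  rw [eM, eP, ← Finset.sum_add_distrib]
  -- combine the inner sums and apply the pointwise identity
  have main : ∀ (u₂ : ZMod 2) (y₁ : Y₁) (y₂ : Y₂) (u₁ : ZMod 2),
      (1/4) * (W₁ (u₁+u₂) y₁ * W₂ u₂ y₂) *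
          Real.logb 2 (polarMinus W₁ W₂ u₁ (y₁,y₂) /
            ((polarMinus W₁ W₂ 0 (y₁,y₂) + polarMinus W₁ W₂ 1 (y₁,y₂))/2))
        + (1/2) * polarPlus W₁ W₂ u₂ (y₁,y₂,u₁) *
          Real.logb 2 (polarPlus W₁ W₂ u₂ (y₁,y₂,u₁) /
            ((polarPlus W₁ W₂ 0 (y₁,y₂,u₁) + polarPlus W₁ W₂ 1 (y₁,y₂,u₁))/2))
      = (1/4) * (W₁ (u₁+u₂) y₁ * W₂ u₂ y₂) *
          (Real.logb 2 (W₁ (u₁+u₂) y₁ / ((W₁ 0 y₁ + W₁ 1 y₁)/2))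
            + Real.logb 2 (W₂ u₂ y₂ / ((W₂ 0 y₂ + W₂ 1 y₂)/2))) := by
    intro u₂ y₁ y₂ u₁
    have hpp : polarPlus W₁ W₂ u₂ (y₁,y₂,u₁) = (1/2) * W₁ (u₁+u₂) y₁ * W₂ u₂ y₂ := rfl
    rw [hpp, hPsum y₁ y₂ u₁, hMsum y₁ y₂]
    exact key_log _ _ _ _ _ (hW₁0 _ _) (hW₂0 _ _) (hle₁ _ _) (hle₂ _ _) (hmb u₁ u₂ y₁ y₂)
  calc (∑ u₂ : ZMod 2, ((∑ y₁ : Y₁, ∑ y₂ : Y₂, ∑ u₁ : ZMod 2,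
        (1/4) * (W₁ (u₁+u₂) y₁ * W₂ u₂ y₂) *
          Real.logb 2 (polarMinus W₁ W₂ u₁ (y₁,y₂) /
            ((polarMinus W₁ W₂ 0 (y₁,y₂) + polarMinus W₁ W₂ 1 (y₁,y₂))/2)))
      + ∑ y₁ : Y₁, ∑ y₂ : Y₂, ∑ u₁ : ZMod 2,
        (1/2) * polarPlus W₁ W₂ u₂ (y₁,y₂,u₁) *
          Real.logb 2 (polarPlus W₁ W₂ u₂ (y₁,y₂,u₁) /
            ((polarPlus W₁ W₂ 0 (y₁,y₂,u₁) + polarPlus W₁ W₂ 1 (y₁,y₂,u₁))/2))))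
      = ∑ u₂ : ZMod 2, ∑ y₁ : Y₁, ∑ y₂ : Y₂, ∑ u₁ : ZMod 2,
          (1/4) * (W₁ (u₁+u₂) y₁ * W₂ u₂ y₂) *
            (Real.logb 2 (W₁ (u₁+u₂) y₁ / ((W₁ 0 y₁ + W₁ 1 y₁)/2))
              + Real.logb 2 (W₂ u₂ y₂ / ((W₂ 0 y₂ + W₂ 1 y₂)/2))) := by
        refine Finset.sum_congr rfl fun u₂ _ => ?_
        rw [← Finset.sum_add_distrib]
        refine Finset.sum_congr rfl fun y₁ _ => ?_
        rw [← Finset.sum_add_distrib]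
        refine Finset.sum_congr rfl fun y₂ _ => ?_
        rw [← Finset.sum_add_distrib]
        exact Finset.sum_congr rfl fun u₁ _ => main u₂ y₁ y₂ u₁
    _ = (∑ u₂ : ZMod 2, ∑ y₁ : Y₁, ∑ y₂ : Y₂, ∑ u₁ : ZMod 2,
          (1/4) * (W₁ (u₁+u₂) y₁ * W₂ u₂ y₂) *
            Real.logb 2 (W₁ (u₁+u₂) y₁ / ((W₁ 0 y₁ + W₁ 1 y₁)/2)))
        + ∑ u₂ : ZMod 2, ∑ y₁ : Y₁, ∑ y₂ : Y₂, ∑ u₁ : ZMod 2,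
          (1/4) * (W₁ (u₁+u₂) y₁ * W₂ u₂ y₂) *
            Real.logb 2 (W₂ u₂ y₂ / ((W₂ 0 y₂ + W₂ 1 y₂)/2)) := by
        simp only [mul_add, Finset.sum_add_distrib]
    _ = symCap W₁ + symCap W₂ := by
        congr 1
        · -- first piece equals symCap W₁
          calc ∑ u₂ : ZMod 2, ∑ y₁ : Y₁, ∑ y₂ : Y₂, ∑ u₁ : ZMod 2,
                (1/4) * (W₁ (u₁+u₂) y₁ * W₂ u₂ y₂) *
                  Real.logb 2 (W₁ (u₁+u₂) y₁ / ((W₁ 0 y₁ + W₁ 1 y₁)/2))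
              = ∑ u₂ : ZMod 2, ∑ y₁ : Y₁, ∑ y₂ : Y₂, ∑ x : ZMod 2,
                (1/4) * (W₁ x y₁ * W₂ u₂ y₂) *
                  Real.logb 2 (W₁ x y₁ / ((W₁ 0 y₁ + W₁ 1 y₁)/2)) :=
              Finset.sum_congr rfl fun u₂ _ => Finset.sum_congr rfl fun y₁ _ =>
                Finset.sum_congr rfl fun y₂ _ => reindex u₂
                  (fun x => (1/4) * (W₁ x y₁ * W₂ u₂ y₂) *
                    Real.logb 2 (W₁ x y₁ / ((W₁ 0 y₁ + W₁ 1 y₁)/2)))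
            _ = ∑ u₂ : ZMod 2, ∑ y₁ : Y₁, ∑ x : ZMod 2, ∑ y₂ : Y₂,
                (1/4) * (W₁ x y₁ * W₂ u₂ y₂) *
                  Real.logb 2 (W₁ x y₁ / ((W₁ 0 y₁ + W₁ 1 y₁)/2)) :=
              Finset.sum_congr rfl fun u₂ _ => Finset.sum_congr rfl fun y₁ _ =>
                Finset.sum_comm
            _ = ∑ u₂ : ZMod 2, ∑ y₁ : Y₁, ∑ x : ZMod 2,
                (1/4) * W₁ x y₁ *
                  Real.logb 2 (W₁ x y₁ / ((W₁ 0 y₁ + W₁ 1 y₁)/2)) :=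
              Finset.sum_congr rfl fun u₂ _ => Finset.sum_congr rfl fun y₁ _ =>
                Finset.sum_congr rfl fun x _ =>
                  sum_weight_eq (hW₂s u₂)
                    ((1/4) * W₁ x y₁ * Real.logb 2 (W₁ x y₁ / ((W₁ 0 y₁ + W₁ 1 y₁)/2)))
                    _ (fun y₂ => by ring)
            _ = ∑ u₂ : ZMod 2, ∑ x : ZMod 2, ∑ y₁ : Y₁,
                (1/4) * W₁ x y₁ *
                  Real.logb 2 (W₁ x y₁ / ((W₁ 0 y₁ + W₁ 1 y₁)/2)) :=
              Finset.sum_congr rfl fun u₂ _ => Finset.sum_comm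
            _ = ∑ x : ZMod 2, ∑ y₁ : Y₁, ∑ u₂ : ZMod 2,
                (1/4) * W₁ x y₁ *
                  Real.logb 2 (W₁ x y₁ / ((W₁ 0 y₁ + W₁ 1 y₁)/2)) :=
              sum_rot3' _
            _ = symCap W₁ := by
              refine Finset.sum_congr rfl fun x _ => Finset.sum_congr rfl fun y₁ _ => ?_
              rw [sum_zmod2]
              ring
        · -- second piece equals symCap W₂
          calc ∑ u₂ : ZMod 2, ∑ y₁ : Y₁, ∑ y₂ : Y₂, ∑ u₁ : ZMod 2,
                (1/4) * (W₁ (u₁+u₂) y₁ * W₂ u₂ y₂) *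
                  Real.logb 2 (W₂ u₂ y₂ / ((W₂ 0 y₂ + W₂ 1 y₂)/2))
              = ∑ u₂ : ZMod 2, ∑ u₁ : ZMod 2, ∑ y₁ : Y₁, ∑ y₂ : Y₂,
                (1/4) * (W₁ (u₁+u₂) y₁ * W₂ u₂ y₂) *
                  Real.logb 2 (W₂ u₂ y₂ / ((W₂ 0 y₂ + W₂ 1 y₂)/2)) :=
              Finset.sum_congr rfl fun u₂ _ => sum_rot3 _
            _ = ∑ u₂ : ZMod 2, ∑ u₁ : ZMod 2, ∑ y₂ : Y₂, ∑ y₁ : Y₁,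
                (1/4) * (W₁ (u₁+u₂) y₁ * W₂ u₂ y₂) *
                  Real.logb 2 (W₂ u₂ y₂ / ((W₂ 0 y₂ + W₂ 1 y₂)/2)) :=
              Finset.sum_congr rfl fun u₂ _ => Finset.sum_congr rfl fun u₁ _ =>
                Finset.sum_comm
            _ = ∑ u₂ : ZMod 2, ∑ u₁ : ZMod 2, ∑ y₂ : Y₂,
                (1/4) * W₂ u₂ y₂ *
                  Real.logb 2 (W₂ u₂ y₂ / ((W₂ 0 y₂ + W₂ 1 y₂)/2)) :=
              Finset.sum_congr rfl fun u₂ _ => Finset.sum_congr rfl fun u₁ _ =>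
                Finset.sum_congr rfl fun y₂ _ =>
                  sum_weight_eq (hW₁s (u₁+u₂))
                    ((1/4) * W₂ u₂ y₂ * Real.logb 2 (W₂ u₂ y₂ / ((W₂ 0 y₂ + W₂ 1 y₂)/2)))
                    _ (fun y₁ => by ring)
            _ = ∑ u₂ : ZMod 2, ∑ y₂ : Y₂, ∑ u₁ : ZMod 2,
                (1/4) * W₂ u₂ y₂ *
                  Real.logb 2 (W₂ u₂ y₂ / ((W₂ 0 y₂ + W₂ 1 y₂)/2)) :=
              Finset.sum_congr rfl fun u₂ _ => Finset.sum_comm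
            _ = symCap W₂ := by
              refine Finset.sum_congr rfl fun u₂ _ => Finset.sum_congr rfl fun y₂ _ => ?_
              rw [sum_zmod2]
              ring
end

section
/- Puncturing the second output of the basic polarization block: if W₂ is the zero-capacity (punctured) channel W₀ and W₁ is any B-DMC, then the bit channels of the single-step polar transform satisfy I(W⁻) = 0 and I(W⁺) = I(W₁). -/
lemma zmod2_sum (f : ZMod 2 → ℝ) : ∑ x : ZMod 2, f x = f 0 + f 1 := by
  show ∑ x : Fin 2, f x = _
  exact Fin.sum_univ_two f

lemma self_logb (g : ℝ) : g * Real.logb 2 (g / ((g + g) / 2)) = 0 := by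
  rw [show (g + g) / 2 = g by ring]
  rcases eq_or_ne g 0 with h | h
  · simp [h]
  · rw [div_self h, Real.logb_one, mul_zero]

lemma ratio_lem (a p q : ℝ) : (1/2*a) / ((1/2*p + 1/2*q)/2) = a/((p+q)/2) := by
  rcases eq_or_ne (p + q) 0 with h | h
  · rw [show (1/2*p + 1/2*q)/2 = (p+q)/4 by ring, h]
    simp
  · field_simp

/-- Puncturing the second output of the basic polarization block:
if `W₂` is the zero-capacity punctured channel, then `I(W⁻) = 0` and `I(W⁺) = I(W₁)`. -/
theorem puncture_second_output {Y₁ : Type} [Fintype Y₁]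
    (W₁ : ZMod 2 → Y₁ → ℝ) (h₁ : IsBDMC W₁) :
    symCap (polarMinus W₁ puncturedChannel) = 0 ∧
      symCap (polarPlus W₁ puncturedChannel) = symCap W₁ := by
  constructor
  · rw [symCap]
    apply Finset.sum_eq_zero
    intro x _
    apply Finset.sum_eq_zero
    intro y _
    simp only [polarMinus, puncturedChannel, mul_one, zmod2_sum]
    have hx01 : x = 0 ∨ x = 1 := by
      fin_cases x
      · exact Or.inl rfl
      · exact Or.inr rfl
    have hx : W₁ (x + 0) y.1 + W₁ (x + 1) y.1 = W₁ 0 y.1 + W₁ 1 y.1 := by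
      rcases hx01 with h | h <;> subst h
      · norm_num
      · rw [show (1 : ZMod 2) + 0 = 1 by decide, show (1 : ZMod 2) + 1 = 0 by decide]
        ring
    rw [hx, show (0:ZMod 2) + 0 = 0 by decide, show (0:ZMod 2) + 1 = 1 by decide,
      show (1:ZMod 2) + 0 = 1 by decide, show (1:ZMod 2) + 1 = 0 by decide]
    rw [show W₁ 1 y.1 + W₁ 0 y.1 = W₁ 0 y.1 + W₁ 1 y.1 by ring, mul_assoc, self_logb, mul_zero]
  · rw [symCap, symCap, zmod2_sum, zmod2_sum]
    simp only [polarPlus, puncturedChannel, mul_one, Fintype.sum_prod_type]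
    simp only [Finset.univ_unique, Finset.sum_singleton, zmod2_sum]
    rw [← Finset.sum_add_distrib, ← Finset.sum_add_distrib]
    apply Finset.sum_congr rfl
    intro y _
    rw [show (0:ZMod 2) + 0 = 0 by decide, show (0:ZMod 2) + 1 = 1 by decide,
      show (1:ZMod 2) + 0 = 1 by decide, show (1:ZMod 2) + 1 = 0 by decide]
    generalize W₁ 0 y = a
    generalize W₁ 1 y = b
    rw [ratio_lem a a b, ratio_lem b a b, ratio_lem b b a, ratio_lem a b a,
      show b + a = a + b by ring]
    ring
end

section
/- Bhattacharyya parameter evolution for one polarization step over two different channels: for any two B-DMCs W₁ and W₂, the bit channels of the single-step polar transform satisfy Z(W⁺) = Z(W₁)·Z(W₂) and Z(W⁻) ≤ Z(W₁) + Z(W₂) − Z(W₁)·Z(W₂). -/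
lemma key_ineq (a b c d : ℝ) (ha : 0 ≤ a) (hb : 0 ≤ b) (hc : 0 ≤ c) (hd : 0 ≤ d) :
    Real.sqrt ((a*c+b*d)*(a*d+b*c)) ≤
      Real.sqrt (a*b)*(c+d) + (a+b)*Real.sqrt (c*d)
        - 2*(Real.sqrt (a*b)*Real.sqrt (c*d)) := by
  set p := Real.sqrt (a*b) with hp
  set q := Real.sqrt (c*d) with hq
  have hp0 : 0 ≤ p := Real.sqrt_nonneg _
  have hq0 : 0 ≤ q := Real.sqrt_nonneg _
  have hp2 : p^2 = a*b := Real.sq_sqrt (mul_nonneg ha hb)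
  have hq2 : q^2 = c*d := Real.sq_sqrt (mul_nonneg hc hd)
  have hab : 2*p ≤ a + b := by
    nlinarith [sq_nonneg (Real.sqrt a - Real.sqrt b), Real.sq_sqrt ha, Real.sq_sqrt hb,
      Real.sqrt_nonneg a, Real.sqrt_nonneg b, Real.sqrt_mul ha b]
  have hcd : 2*q ≤ c + d := by
    nlinarith [sq_nonneg (Real.sqrt c - Real.sqrt d), Real.sq_sqrt hc, Real.sq_sqrt hd,
      Real.sqrt_nonneg c, Real.sqrt_nonneg d, Real.sqrt_mul hc d]
  have hR0 : 0 ≤ p*(c+d) + (a+b)*q - 2*(p*q) := by nlinarith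
  have hid : (p*(c+d)+(a+b)*q-2*(p*q))^2 - (a*c+b*d)*(a*d+b*c)
      = 2*p*q*(a+b-2*p)*(c+d-2*q) := by
    linear_combination ((c+d)^2 - 4*q^2)*hp2 + ((a+b)^2 - 4*a*b)*hq2
  have hT : 0 ≤ 2*p*q*(a+b-2*p)*(c+d-2*q) := by
    have := mul_nonneg (mul_nonneg (mul_nonneg (by positivity : (0:ℝ) ≤ 2*p) hq0)
      (by linarith : (0:ℝ) ≤ a+b-2*p)) (by linarith : (0:ℝ) ≤ c+d-2*q)
    linarith [this]
  have hL : (a*c+b*d)*(a*d+b*c) ≤ (p*(c+d) + (a+b)*q - 2*(p*q))^2 := by linarith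
  calc Real.sqrt ((a*c+b*d)*(a*d+b*c)) ≤ Real.sqrt ((p*(c+d) + (a+b)*q - 2*(p*q))^2) :=
        Real.sqrt_le_sqrt hL
    _ = p*(c+d) + (a+b)*q - 2*(p*q) := Real.sqrt_sq hR0

/-- Bhattacharyya parameter evolution for one polarization step over two
different channels: `Z(W⁺) = Z(W₁)·Z(W₂)` and `Z(W⁻) ≤ Z(W₁) + Z(W₂) − Z(W₁)·Z(W₂)`. -/
theorem bhattacharyya_one_step {Y₁ Y₂ : Type} [Fintype Y₁] [Fintype Y₂]
    (W₁ : ZMod 2 → Y₁ → ℝ) (W₂ : ZMod 2 → Y₂ → ℝ)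
    (h₁ : IsBDMC W₁) (h₂ : IsBDMC W₂) :
    bhat (polarPlus W₁ W₂) = bhat W₁ * bhat W₂ ∧
      bhat (polarMinus W₁ W₂) ≤ bhat W₁ + bhat W₂ - bhat W₁ * bhat W₂ := by
  obtain ⟨h₁n, h₁s⟩ := h₁
  obtain ⟨h₂n, h₂s⟩ := h₂
  set f : Y₁ → ℝ := fun y => Real.sqrt (W₁ 0 y * W₁ 1 y) with hf
  set g : Y₂ → ℝ := fun y => Real.sqrt (W₂ 0 y * W₂ 1 y) with hg
  constructor
  · -- plus part
    have step : ∀ y : Y₁ × Y₂ × ZMod 2,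
        Real.sqrt (polarPlus W₁ W₂ 0 y * polarPlus W₁ W₂ 1 y)
          = 1/2 * (f y.1 * g y.2.1) := by
      rintro ⟨y₁, y₂, u⟩
      simp only [polarPlus]
      have hcase : (1/2 * W₁ (u + 0) y₁ * W₂ 0 y₂) * (1/2 * W₁ (u + 1) y₁ * W₂ 1 y₂)
          = (1/2)^2 * ((W₁ 0 y₁ * W₁ 1 y₁) * (W₂ 0 y₂ * W₂ 1 y₂)) := by
        rcases (by revert u; decide : u = 0 ∨ u = 1) with h | h <;> subst h <;>
          simp only [add_zero, zero_add, show ((1:ZMod 2) + 1) = 0 from by decide] <;> ring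
      rw [hcase, Real.sqrt_mul (by positivity),
        Real.sqrt_sq (by norm_num : (0:ℝ) ≤ 1/2),
        Real.sqrt_mul (mul_nonneg (h₁n 0 y₁) (h₁n 1 y₁))]
    unfold bhat
    rw [Finset.sum_congr rfl fun y _ => step y]
    rw [Fintype.sum_prod_type]
    simp only [Fintype.sum_prod_type]
    have : ∀ y₁ : Y₁, ∑ y₂ : Y₂, ∑ _u : ZMod 2, 1/2 * (f y₁ * g y₂)
        = f y₁ * ∑ y₂, g y₂ := by
      intro y₁
      have h2 : ∀ y₂ : Y₂, ∑ _u : ZMod 2, 1/2 * (f y₁ * g y₂) = f y₁ * g y₂ := by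
        intro y₂
        rw [Finset.sum_const, Finset.card_univ]
        simp [ZMod.card]
        try ring
      rw [Finset.sum_congr rfl fun y₂ _ => h2 y₂, ← Finset.mul_sum]
    rw [Finset.sum_congr rfl fun y₁ _ => this y₁, ← Finset.sum_mul]
  · -- minus part
    have Z2 : bhat W₂ = ∑ y, g y := rfl
    have step : ∀ y : Y₁ × Y₂,
        Real.sqrt (polarMinus W₁ W₂ 0 y * polarMinus W₁ W₂ 1 y)
          ≤ 1/2 * (f y.1 * (W₂ 0 y.2 + W₂ 1 y.2) + (W₁ 0 y.1 + W₁ 1 y.1) * g y.2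
              - 2 * (f y.1 * g y.2)) := by
      rintro ⟨y₁, y₂⟩
      set a := W₁ 0 y₁; set b := W₁ 1 y₁; set c := W₂ 0 y₂; set d := W₂ 1 y₂
      have hm : polarMinus W₁ W₂ 0 (y₁, y₂) * polarMinus W₁ W₂ 1 (y₁, y₂)
          = (1/2)^2 * ((a*c + b*d) * (a*d + b*c)) := by
        simp only [polarMinus, zmod2_sum, add_zero, zero_add,
          show ((1:ZMod 2) + 1) = 0 from by decide]
        ring
      rw [hm, Real.sqrt_mul (by positivity), Real.sqrt_sq (by norm_num : (0:ℝ) ≤ 1/2)]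
      have := key_ineq a b c d (h₁n 0 y₁) (h₁n 1 y₁) (h₂n 0 y₂) (h₂n 1 y₂)
      have hfg : f y₁ = Real.sqrt (a*b) := rfl
      have hgg : g y₂ = Real.sqrt (c*d) := rfl
      rw [hfg, hgg]
      linarith
    calc bhat (polarMinus W₁ W₂)
        ≤ ∑ y : Y₁ × Y₂, 1/2 * (f y.1 * (W₂ 0 y.2 + W₂ 1 y.2)
            + (W₁ 0 y.1 + W₁ 1 y.1) * g y.2 - 2 * (f y.1 * g y.2)) :=
          Finset.sum_le_sum fun y _ => step y
      _ = bhat W₁ + bhat W₂ - bhat W₁ * bhat W₂ := by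
          rw [Fintype.sum_prod_type]
          have inner : ∀ y₁ : Y₁, ∑ y₂ : Y₂, 1/2 * (f y₁ * (W₂ 0 y₂ + W₂ 1 y₂)
              + (W₁ 0 y₁ + W₁ 1 y₁) * g y₂ - 2 * (f y₁ * g y₂))
              = 1/2 * (f y₁ * 2 + (W₁ 0 y₁ + W₁ 1 y₁) * bhat W₂ - 2 * (f y₁ * bhat W₂)) := by
            intro y₁
            have e1 : ∑ y₂ : Y₂, (W₂ 0 y₂ + W₂ 1 y₂) = 2 := by
              rw [Finset.sum_add_distrib, h₂s 0, h₂s 1]; norm_num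
            rw [show (fun y₂ : Y₂ => 1/2 * (f y₁ * (W₂ 0 y₂ + W₂ 1 y₂)
                + (W₁ 0 y₁ + W₁ 1 y₁) * g y₂ - 2 * (f y₁ * g y₂)))
              = fun y₂ : Y₂ => 1/2 * f y₁ * (W₂ 0 y₂ + W₂ 1 y₂)
                + 1/2 * (W₁ 0 y₁ + W₁ 1 y₁) * g y₂
                + (- (f y₁)) * g y₂ from by funext y₂; ring]
            rw [Finset.sum_add_distrib, Finset.sum_add_distrib,
              ← Finset.mul_sum, ← Finset.mul_sum, ← Finset.mul_sum, e1, Z2]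
            ring
          rw [Finset.sum_congr rfl fun y₁ _ => inner y₁]
          rw [show (fun y₁ : Y₁ => 1/2 * (f y₁ * 2 + (W₁ 0 y₁ + W₁ 1 y₁) * bhat W₂
              - 2 * (f y₁ * bhat W₂)))
            = fun y₁ : Y₁ => f y₁ + 1/2 * bhat W₂ * (W₁ 0 y₁ + W₁ 1 y₁)
              + (- bhat W₂) * f y₁ from by funext y₁; ring]
          rw [Finset.sum_add_distrib, Finset.sum_add_distrib, ← Finset.mul_sum,
            ← Finset.mul_sum]
          have e2 : ∑ y₁ : Y₁, (W₁ 0 y₁ + W₁ 1 y₁) = 2 := by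
            rw [Finset.sum_add_distrib, h₁s 0, h₁s 1]; norm_num
          rw [e2]
          have Z1 : bhat W₁ = ∑ y, f y := rfl
          rw [Z1]; ring
end
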